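/- There exists a constant C > 0 such that for every integer n ≥ 2, every real t ≥ n², and every pair x, y ∈ Λ_n, the (x,y) entry of the matrix exponential satisfies (exp(tΔ_n))(x,y) ≤ (C/n²)·e^{−λ_𝟏 t}; i.e., the probability that the rate-1 continuous-time simple random walk on Λ_n killed at ∂Λ_n, started at x, is at y at time t is at most (C/n²)·e^{−λ_𝟏 t}. -/

import Mathlib

open scoped BigOperators

namespace DGFFStmt

/-- The interior box `Λ_n = {1,…,n−1}²`, encoded with `Fin (n-1) × Fin (n-1)`;
the lattice coordinate of `x` is `((x.1 : ℤ) + 1, (x.2 : ℤ) + 1)`. -/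
abbrev Lam (n : ℕ) := Fin (n - 1) × Fin (n - 1)

/-- Lattice coordinates of a point of `Λ_n`. -/
def coord (n : ℕ) (x : Lam n) : ℤ × ℤ := (((x.1 : ℕ) : ℤ) + 1, ((x.2 : ℕ) : ℤ) + 1)

/-- Adjacency in `ℤ²`: Euclidean distance 1. -/
def adj (p q : ℤ × ℤ) : Prop := (p.1 - q.1) ^ 2 + (p.2 - q.2) ^ 2 = 1

instance (p q : ℤ × ℤ) : Decidable (adj p q) := by unfold adj; infer_instance

/-- The discrete Laplacian `Δ_n` on `Λ_n`. -/
noncomputable def Delta (n : ℕ) : Matrix (Lam n) (Lam n) ℝ :=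
  Matrix.of fun x y =>
    if x = y then -1 else if adj (coord n x) (coord n y) then (1 : ℝ) / 4 else 0

/-- `λ_𝟏 = 1 − cos(π/n)`. -/
noncomputable def lamOne (n : ℕ) : ℝ := 1 - Real.cos (Real.pi / n)

/-! ### Auxiliary development: diagonalization of the discrete Laplacian -/

section Aux

/-- The Dirichlet cosine sum. -/
lemma cos_sum (n m : ℕ) (hn : 0 < n) (hm1 : 1 ≤ m) (hm2 : m < 2*n) :
    ∑ j ∈ Finset.range n, Real.cos (j * (m * Real.pi / n)) = if Even m then 0 else 1 := by
  have hnR : (0:ℝ) < n := by exact_mod_cast hn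
  have hπ := Real.pi_pos
  set θ : ℝ := m * Real.pi / n with hθ
  have hθpos : 0 < θ := by
    have : (0:ℝ) < m := by exact_mod_cast hm1
    positivity
  have hθlt : θ / 2 < Real.pi := by
    have hm : (m:ℝ) < 2*n := by exact_mod_cast hm2
    have h2 : θ/2 = (m:ℝ) * Real.pi / (2*n) := by rw [hθ]; ring
    rw [h2, div_lt_iff₀ (by positivity)]
    nlinarith
  have hs : Real.sin (θ/2) ≠ 0 :=
    ne_of_gt (Real.sin_pos_of_pos_of_lt_pi (by positivity) hθlt)
  have tele := Finset.sum_range_sub (fun j : ℕ => Real.sin (((j:ℝ)-1/2)*θ)) n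
  have tele2 : ∑ j ∈ Finset.range n, 2 * Real.sin (θ/2) * Real.cos (j*θ)
      = Real.sin (((n:ℝ)-1/2)*θ) - Real.sin ((((0:ℕ):ℝ)-1/2)*θ) := by
    rw [← tele]
    apply Finset.sum_congr rfl
    intro j _
    rw [Real.sin_sub_sin]
    have h1 : ((((j:ℕ)+1:ℕ):ℝ)-1/2)*θ = (((j:ℝ)+1)-1/2)*θ := by push_cast; ring
    have h2 : (((((j:ℝ)+1)-1/2)*θ - ((j:ℝ)-1/2)*θ))/2 = θ/2 := by ring
    have h3 : (((((j:ℝ)+1)-1/2)*θ + ((j:ℝ)-1/2)*θ))/2 = (j:ℝ)*θ := by ring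
    rw [h1, h2, h3]
  have hnθ : ((n:ℝ)-1/2)*θ = (m:ℝ)*Real.pi - θ/2 := by
    rw [hθ]; field_simp
  have hend : Real.sin (((n:ℝ)-1/2)*θ) = -((-1)^m * Real.sin (θ/2)) := by
    rw [hnθ, Real.sin_nat_mul_pi_sub]
  have hstart : Real.sin ((((0:ℕ):ℝ)-1/2)*θ) = - Real.sin (θ/2) := by
    rw [show (((0:ℕ):ℝ)-1/2)*θ = -(θ/2) by push_cast; ring, Real.sin_neg]
  rw [← Finset.mul_sum] at tele2
  have h2s : (2:ℝ) * Real.sin (θ/2) ≠ 0 := by simp [hs]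
  have hsum : ∑ j ∈ Finset.range n, Real.cos (j*θ)
      = (-((-1:ℝ)^m) + 1) / 2 := by
    apply mul_left_cancel₀ h2s
    rw [tele2, hend, hstart]
    ring
  rw [show (fun j : ℕ => Real.cos ((j:ℝ) * (↑m * Real.pi / ↑n)))
    = fun j : ℕ => Real.cos ((j:ℝ)*θ) from rfl] at *
  rw [hsum]
  rcases Nat.even_or_odd m with he | ho
  · rw [if_pos he, he.neg_one_pow]; norm_num
  · rw [if_neg (Nat.not_even_iff_odd.mpr ho), ho.neg_one_pow]; norm_num

lemma prod_to_sum (A B : ℝ) : Real.sin A * Real.sin B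
    = (Real.cos (A - B) - Real.cos (A + B))/2 := by
  rw [Real.cos_sub, Real.cos_add]; ring

lemma sin_orth_aux (n a b : ℕ) (hn : 0 < n) (hb1 : 1 ≤ b) (hba : b < a) (ha2 : a < n) :
    ∑ j ∈ Finset.range n, Real.sin (j * (a * Real.pi / n)) * Real.sin (j * (b * Real.pi / n))
      = 0 := by
  have hterm : ∀ j : ℕ, Real.sin (j * (a * Real.pi / n)) * Real.sin (j * (b * Real.pi / n))
      = (Real.cos (j * (((a-b:ℕ):ℝ) * Real.pi / n))
          - Real.cos (j * (((a+b:ℕ):ℝ) * Real.pi / n)))/2 := by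
    intro j
    rw [prod_to_sum]
    have h1 : (j:ℝ) * (a * Real.pi / n) - j * (b * Real.pi / n)
        = j * (((a-b:ℕ):ℝ) * Real.pi / n) := by
      rw [Nat.cast_sub hba.le]; ring
    have h2 : (j:ℝ) * (a * Real.pi / n) + j * (b * Real.pi / n)
        = j * (((a+b:ℕ):ℝ) * Real.pi / n) := by
      push_cast; ring
    rw [h1, h2]
  simp only [hterm]
  rw [← Finset.sum_div, Finset.sum_sub_distrib,
    cos_sum n (a-b) hn (by omega) (by omega),
    cos_sum n (a+b) hn (by omega) (by omega)]
  have hev : Even (a-b) ↔ Even (a+b) := by rw [Nat.even_sub hba.le, Nat.even_add]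
  rw [if_congr hev rfl rfl]
  split_ifs <;> norm_num

lemma sin_orth (n a b : ℕ) (hn : 0 < n) (ha1 : 1 ≤ a) (ha2 : a < n) (hb1 : 1 ≤ b)
    (hb2 : b < n) :
    ∑ j ∈ Finset.range n, Real.sin (j * (a * Real.pi / n)) * Real.sin (j * (b * Real.pi / n))
      = if a = b then (n:ℝ)/2 else 0 := by
  rcases lt_trichotomy a b with h | h | h
  · rw [if_neg h.ne]
    have := sin_orth_aux n b a hn ha1 h hb2
    simpa [mul_comm] using this
  · subst h
    rw [if_pos rfl]
    have hterm : ∀ j : ℕ, Real.sin (j * (a * Real.pi / n)) * Real.sin (j * (a * Real.pi / n))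
        = (1 - Real.cos (j * (((2*a:ℕ):ℝ) * Real.pi / n)))/2 := by
      intro j
      rw [prod_to_sum]
      have h1 : (j:ℝ) * (a * Real.pi / n) - j * (a * Real.pi / n) = 0 := by ring
      have h2 : (j:ℝ) * (a * Real.pi / n) + j * (a * Real.pi / n)
          = j * (((2*a:ℕ):ℝ) * Real.pi / n) := by push_cast; ring
      rw [h1, h2, Real.cos_zero]
    simp only [hterm]
    rw [← Finset.sum_div, Finset.sum_sub_distrib,
      cos_sum n (2*a) hn (by omega) (by omega),
      if_pos ⟨a, two_mul a⟩]
    simp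
  · rw [if_neg h.ne']
    exact sin_orth_aux n a b hn hb1 h ha2

/-- The (unnormalized) sine eigenvector matrix. -/
noncomputable def U1 (n : ℕ) : Matrix (Fin (n-1)) (Fin (n-1)) ℝ :=
  Matrix.of fun i k => Real.sin ((((i:ℕ)+1:ℕ):ℝ) * ((((k:ℕ)+1:ℕ):ℝ) * Real.pi / n))

/-- 1D eigenvalue (mode `a`). -/
noncomputable def lamN (n a : ℕ) : ℝ := 1 - Real.cos ((a:ℝ) * Real.pi / n)

/-- The 1D discrete Dirichlet Laplacian. -/
noncomputable def D1 (n : ℕ) : Matrix (Fin (n-1)) (Fin (n-1)) ℝ :=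
  Matrix.of fun i j => if i = j then -1 else if ((i:ℤ)-(j:ℤ))^2 = 1 then 1/2 else 0

noncomputable def F (n a b : ℕ) : ℕ → ℝ := fun m =>
    Real.sin (m * (a * Real.pi / n)) * Real.sin (m * (b * Real.pi / n))

lemma U1_mul_U1 (n : ℕ) (hn : 2 ≤ n) :
    U1 n * U1 n = ((n:ℝ)/2) • (1 : Matrix (Fin (n-1)) (Fin (n-1)) ℝ) := by
  ext k l
  rw [Matrix.mul_apply]
  have hk := k.isLt
  have hl := l.isLt
  set a := (k:ℕ)+1 with ha
  set b := (l:ℕ)+1 with hb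
  have hF : ∀ m : ℕ, F n a b m =
    Real.sin (m * (a * Real.pi / n)) * Real.sin (m * (b * Real.pi / n)) := fun m => rfl
  have step1 : ∑ j : Fin (n-1), U1 n k j * U1 n j l
      = ∑ j ∈ Finset.range (n-1), F n a b (j+1) := by
    rw [← Fin.sum_univ_eq_sum_range (fun j => F n a b (j+1)) (n-1)]
    apply Finset.sum_congr rfl
    intro j _
    rw [hF]
    show Real.sin _ * Real.sin _ = Real.sin _ * Real.sin _
    congr 1 <;> (congr 1; push_cast [ha, hb]; ring)
  have step2 : ∑ j ∈ Finset.range (n-1), F n a b (j+1) = ∑ j ∈ Finset.range n, F n a b j := by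
    have h0 : F n a b 0 = 0 := by rw [hF]; simp
    have h := Finset.sum_range_succ' (F n a b) (n-1)
    rw [show (n-1)+1 = n by omega] at h
    rw [h, h0]; ring
  rw [step1, step2]
  simp only [hF]
  rw [sin_orth n a b (by omega) (by omega) (by omega) (by omega) (by omega)]
  by_cases h : k = l
  · subst h; simp [Matrix.one_apply]; intro h'; exact absurd rfl h'
  · have hab : a ≠ b := fun hc => h (Fin.ext (by omega))
    simp [Matrix.one_apply, h, hab]

lemma int_sq_one (x : ℤ) : x^2 = 1 ↔ x = 1 ∨ x = -1 := by
  constructor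
  · intro h
    have h2 : (x-1)*(x+1) = 0 := by nlinarith
    rcases mul_eq_zero.mp h2 with h3 | h3
    · left; omega
    · right; omega
  · rintro (h|h) <;> simp [h]

noncomputable def G (n k : ℕ) : ℕ → ℝ := fun m => Real.sin ((m:ℝ) * ((k:ℝ) * Real.pi / n))

lemma D1_mul_U1 (n : ℕ) (hn : 2 ≤ n) :
    D1 n * U1 n = U1 n * Matrix.diagonal (fun k : Fin (n-1) => -(lamN n ((k:ℕ)+1))) := by
  ext i k
  rw [Matrix.mul_apply, Matrix.mul_diagonal]
  have hi := i.isLt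
  have hk := k.isLt
  set a : ℕ := (k:ℕ)+1 with hadef
  set iv : ℕ := (i:ℕ) with hivdef
  have hterm : ∀ j ∈ Finset.univ, D1 n i j * U1 n j k
      = (if j = i then (-1:ℝ) else 0) * G n a ((j:ℕ)+1)
        + ((if (j:ℕ)+1 = iv then (1:ℝ) else 0) * G n a ((j:ℕ)+1)
          + (if iv+1 = (j:ℕ) then (1:ℝ) else 0) * G n a ((j:ℕ)+1))/2 := by
    intro j _
    have hu : U1 n j k = G n a ((j:ℕ)+1) := rfl
    have hd : D1 n i j
        = (if j = i then (-1:ℝ) else 0)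
          + ((if (j:ℕ)+1 = iv then (1:ℝ) else 0) + (if iv+1 = (j:ℕ) then (1:ℝ) else 0))/2 := by
      show (if i = j then (-1:ℝ) else if ((i:ℤ)-(j:ℤ))^2 = 1 then 1/2 else 0) = _
      have hfe : (i = j) ↔ (iv = (j:ℕ)) := by rw [Fin.ext_iff]
      have hfe2 : (j = i) ↔ ((j:ℕ) = iv) := by rw [Fin.ext_iff]
      have hsq : ((((i:ℕ):ℤ)-((j:ℕ):ℤ))^2 = 1) ↔ ((j:ℕ)+1 = iv ∨ iv+1 = (j:ℕ)) := by
        rw [int_sq_one]; omega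
      simp only [hfe, hfe2, hsq]
      split_ifs <;> first | (exfalso; omega) | norm_num
    rw [hu, hd]
    ring
  rw [Finset.sum_congr rfl hterm, Finset.sum_add_distrib, ← Finset.sum_div,
    Finset.sum_add_distrib]
  have SA : ∑ j : Fin (n-1), (if j = i then (-1:ℝ) else 0) * G n a ((j:ℕ)+1)
      = -G n a (iv+1) := by
    rw [Finset.sum_eq_single i]
    · rw [if_pos rfl, neg_one_mul]
    · intro j _ hj; rw [if_neg hj, zero_mul]
    · intro h; exact absurd (Finset.mem_univ _) h
  have SB : ∑ j : Fin (n-1), (if (j:ℕ)+1 = iv then (1:ℝ) else 0) * G n a ((j:ℕ)+1)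
      = G n a iv := by
    by_cases h0 : iv = 0
    · rw [Finset.sum_eq_zero]
      · rw [h0]; simp [G]
      · intro j _; rw [if_neg (by omega), zero_mul]
    · rw [Finset.sum_eq_single (⟨iv-1, by omega⟩ : Fin (n-1))]
      · rw [if_pos (by simp; omega), one_mul]
        congr 1
        simp only []
        omega
      · intro j _ hj
        rw [if_neg, zero_mul]
        intro hc
        exact hj (Fin.ext (by simp; omega))
      · intro h; exact absurd (Finset.mem_univ _) h
  have SC : ∑ j : Fin (n-1), (if iv+1 = (j:ℕ) then (1:ℝ) else 0) * G n a ((j:ℕ)+1)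
      = G n a (iv+2) := by
    have hGn : G n a n = 0 := by
      show Real.sin _ = 0
      rw [show (n:ℝ) * ((a:ℝ) * Real.pi / n) = (a:ℝ) * Real.pi by
        field_simp]
      exact Real.sin_nat_mul_pi a
    by_cases h0 : iv = n-2
    · rw [Finset.sum_eq_zero]
      · rw [show iv + 2 = n by omega, hGn]
      · intro j _
        have := j.isLt
        rw [if_neg (by omega), zero_mul]
    · rw [Finset.sum_eq_single (⟨iv+1, by omega⟩ : Fin (n-1))]
      · rw [if_pos (by simp), one_mul]
      · intro j _ hj
        rw [if_neg, zero_mul]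
        intro hc
        exact hj (Fin.ext (by simp; omega))
      · intro h; exact absurd (Finset.mem_univ _) h
  rw [SA, SB, SC]
  have hu2 : U1 n i k = G n a (iv+1) := rfl
  have trig : G n a iv + G n a (iv+2)
      = 2 * Real.cos ((a:ℝ) * Real.pi / n) * G n a (iv+1) := by
    show Real.sin _ + Real.sin _ = 2 * _ * Real.sin _
    rw [show ((iv:ℕ):ℝ) * ((a:ℝ) * Real.pi / n)
        = (((iv+1:ℕ)):ℝ) * ((a:ℝ) * Real.pi / n) - (a:ℝ) * Real.pi / n by push_cast; ring,
      show (((iv+2:ℕ)):ℝ) * ((a:ℝ) * Real.pi / n)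
        = (((iv+1:ℕ)):ℝ) * ((a:ℝ) * Real.pi / n) + (a:ℝ) * Real.pi / n by push_cast; ring,
      Real.sin_sub, Real.sin_add]
    ring
  rw [hu2, trig]
  simp only [lamN]
  push_cast
  ring

lemma int_sq_sum_one (a b : ℤ) : a^2 + b^2 = 1 ↔
    (a = 0 ∧ (b = 1 ∨ b = -1)) ∨ (b = 0 ∧ (a = 1 ∨ a = -1)) := by
  constructor
  · intro h
    have ha1 : -1 ≤ a := by nlinarith
    have ha2 : a ≤ 1 := by nlinarith
    have hb1 : -1 ≤ b := by nlinarith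
    have hb2 : b ≤ 1 := by nlinarith
    interval_cases a <;> interval_cases b <;> norm_num at h <;> norm_num
  · rintro (⟨h1, h2 | h2⟩ | ⟨h1, h2 | h2⟩) <;> rw [h1, h2] <;> norm_num

open Kronecker in
lemma Delta_kron (n : ℕ) (hn : 2 ≤ n) :
    Delta n = (2⁻¹ : ℝ) • (D1 n ⊗ₖ (1 : Matrix (Fin (n-1)) (Fin (n-1)) ℝ)
      + (1 : Matrix (Fin (n-1)) (Fin (n-1)) ℝ) ⊗ₖ D1 n) := by
  ext x y
  obtain ⟨x1, x2⟩ := x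
  obtain ⟨y1, y2⟩ := y
  have hadj : adj (coord n (x1,x2)) (coord n (y1,y2)) ↔
      (((x1:ℕ):ℤ) - ((y1:ℕ):ℤ))^2 + (((x2:ℕ):ℤ) - ((y2:ℕ):ℤ))^2 = 1 := by
    unfold adj coord
    rw [show ((((x1:ℕ):ℤ)+1) - (((y1:ℕ):ℤ)+1)) = ((x1:ℕ):ℤ) - ((y1:ℕ):ℤ) from by ring,
      show ((((x2:ℕ):ℤ)+1) - (((y2:ℕ):ℤ)+1)) = ((x2:ℕ):ℤ) - ((y2:ℕ):ℤ) from by ring]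
  show (if (x1,x2) = (y1,y2) then (-1:ℝ)
      else if adj (coord n (x1,x2)) (coord n (y1,y2)) then 1/4 else 0) = _
  simp only [Matrix.smul_apply, Matrix.add_apply, Matrix.kroneckerMap_apply,
    Matrix.one_apply, D1, Matrix.of_apply, smul_eq_mul, hadj, int_sq_sum_one,
    Prod.mk.injEq, Fin.ext_iff]
  have h1 : ∀ (u v : Fin (n-1)), (((u:ℕ):ℤ) - ((v:ℕ):ℤ))^2 = 1 ↔
      (((u:ℕ):ℤ) - ((v:ℕ):ℤ) = 1 ∨ ((u:ℕ):ℤ) - ((v:ℕ):ℤ) = -1) := by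
    intro u v
    constructor
    · intro h
      have h2 : ((((u:ℕ):ℤ) - ((v:ℕ):ℤ))-1)*((((u:ℕ):ℤ) - ((v:ℕ):ℤ))+1) = 0 := by nlinarith
      rcases mul_eq_zero.mp h2 with h3 | h3
      · left; omega
      · right; omega
    · rintro (h|h) <;> rw [h] <;> norm_num
  simp only [h1, sub_eq_zero]
  split_ifs <;> first | (exfalso; omega) | norm_num


open Kronecker Matrix in
lemma exp_entry (n : ℕ) (hn : 2 ≤ n) (t : ℝ) (x y : Lam n) :
    NormedSpace.exp (t • Delta n) x y
      = ∑ k : Lam n, (U1 n ⊗ₖ U1 n) x k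
          * Real.exp (t * (-(lamN n ((k.1:ℕ)+1) + lamN n ((k.2:ℕ)+1))/2))
          * (((n:ℝ)^2/4)⁻¹ * (U1 n ⊗ₖ U1 n) k y) := by
  have hnR : (0:ℝ) < n := by exact_mod_cast (by omega : 0 < n)
  set U : Matrix (Lam n) (Lam n) ℝ := U1 n ⊗ₖ U1 n with hU
  set c : ℝ := (n:ℝ)^2/4 with hc
  have hc0 : c ≠ 0 := by rw [hc]; positivity
  have hUU : U * U = c • (1 : Matrix (Lam n) (Lam n) ℝ) := by
    rw [hU, ← Matrix.mul_kronecker_mul, U1_mul_U1 n hn, Matrix.smul_kronecker,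
      Matrix.kronecker_smul, Matrix.one_kronecker_one, smul_smul,
      show ((n:ℝ)/2 * ((n:ℝ)/2)) = c from by rw [hc]; ring]
  set Uu : (Matrix (Lam n) (Lam n) ℝ)ˣ :=
    { val := U
      inv := c⁻¹ • U
      val_inv := by
        rw [Matrix.mul_smul, hUU, smul_smul, inv_mul_cancel₀ hc0, one_smul]
      inv_val := by
        rw [Matrix.smul_mul, hUU, smul_smul, inv_mul_cancel₀ hc0, one_smul] } with hUu
  set dv : Lam n → ℝ := fun k => -(lamN n ((k.1:ℕ)+1) + lamN n ((k.2:ℕ)+1))/2 with hdv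
  set L : Matrix (Fin (n-1)) (Fin (n-1)) ℝ :=
    Matrix.diagonal (fun k : Fin (n-1) => -(lamN n ((k:ℕ)+1))) with hL
  have hDg : Matrix.diagonal dv
      = (2⁻¹:ℝ) • ((L ⊗ₖ (1 : Matrix (Fin (n-1)) (Fin (n-1)) ℝ))
        + ((1 : Matrix (Fin (n-1)) (Fin (n-1)) ℝ) ⊗ₖ L)) := by
    rw [hL]
    ext k l
    simp only [Matrix.diagonal_apply, Matrix.smul_apply, Matrix.add_apply,
      Matrix.kroneckerMap_apply, Matrix.one_apply, smul_eq_mul, hdv, Prod.ext_iff]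
    by_cases h1 : k.1 = l.1 <;> by_cases h2 : k.2 = l.2 <;>
      simp [h1, h2] <;> ring
  have hdiag : Delta n * U = U * Matrix.diagonal dv := by
    rw [Delta_kron n hn, hDg, hU, Matrix.smul_mul, Matrix.mul_smul, Matrix.add_mul,
      Matrix.mul_add, ← Matrix.mul_kronecker_mul, ← Matrix.mul_kronecker_mul,
      ← Matrix.mul_kronecker_mul, ← Matrix.mul_kronecker_mul, D1_mul_U1 n hn,
      Matrix.one_mul, Matrix.mul_one]
  have hDe : Delta n = Uu.val * Matrix.diagonal dv * (Uu⁻¹).val := by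
    have h1 : Uu.val * (Uu⁻¹).val = 1 := Uu.mul_inv
    calc Delta n = Delta n * (Uu.val * (Uu⁻¹).val) := by rw [h1, Matrix.mul_one]
      _ = (Delta n * Uu.val) * (Uu⁻¹).val := by rw [Matrix.mul_assoc]
      _ = Uu.val * Matrix.diagonal dv * (Uu⁻¹).val := by
          rw [show Uu.val = U from rfl, hdiag]
  have hsm : t • Delta n = Uu.val * (Matrix.diagonal (fun k => t * dv k)) * (Uu⁻¹).val := by
    rw [hDe, show (fun k => t * dv k) = t • dv from rfl, Matrix.diagonal_smul,
      Matrix.mul_smul, Matrix.smul_mul]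
  rw [hsm, Matrix.exp_units_conj Uu _, Matrix.exp_diagonal]
  have hexp : (NormedSpace.exp fun k => t * dv k) = fun k => Real.exp (t * dv k) := by
    rw [Pi.exp_def]
    funext k
    exact (congrFun Real.exp_eq_exp_ℝ _).symm
  rw [hexp]
  have hUinv : (Uu⁻¹).val = c⁻¹ • U := rfl
  rw [hUinv, Matrix.mul_apply]
  apply Finset.sum_congr rfl
  intro k _
  rw [Matrix.mul_diagonal, Matrix.smul_apply, smul_eq_mul]

end Aux

set_option maxHeartbeats 1000000 in
open Kronecker in
/-- Heat-kernel entry bound: for `t ≥ n²`, `(e^{tΔ_n})(x,y) ≤ (C/n²)·e^{−λ_𝟏 t}`. -/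
theorem heat_kernel_entry_bound :
    ∃ C : ℝ, 0 < C ∧ ∀ n : ℕ, 2 ≤ n → ∀ t : ℝ, (n : ℝ) ^ 2 ≤ t → ∀ x y : Lam n,
      NormedSpace.exp (t • Delta n) x y ≤ C / (n : ℝ) ^ 2 * Real.exp (-(lamOne n) * t) := by
  refine ⟨900, by norm_num, ?_⟩
  intro n hn t ht x y
  have hnR : (0:ℝ) < n := by exact_mod_cast (by omega : 0 < n)
  have hπ := Real.pi_pos
  set c : ℝ := (n:ℝ)^2/4 with hc
  have hcpos : 0 < c := by rw [hc]; positivity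
  have hl1 : lamOne n = lamN n 1 := by simp [lamOne, lamN]
  set r : ℝ := Real.exp (-1) with hr
  have hr0 : 0 < r := Real.exp_pos _
  have hrhalf : r ≤ 1/2 := by
    have h2e : (2:ℝ) ≤ Real.exp 1 := by
      have := Real.exp_one_gt_d9
      linarith
    rw [hr, Real.exp_neg]
    rw [inv_le_comm₀ (by linarith) (by norm_num)]
    linarith
  set e1 : Fin (n-1) → ℝ := fun a => Real.exp (t * (-(lamN n ((a:ℕ)+1))/2)) with he1
  set Bv : ℝ := Real.exp (-(lamOne n * t)/2) * Real.exp ((3:ℝ)/2) * 2 with hBv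
  -- pointwise eigenvalue bounds
  have hB : ∀ a : Fin (n-1), e1 a ≤
      Real.exp (-(lamOne n * t)/2) * (Real.exp ((3:ℝ)/2) * r^(a:ℕ)) := by
    intro a
    have hal := a.isLt
    set m : ℕ := (a:ℕ)+1 with hm
    have hm1 : (1:ℝ) ≤ (m:ℝ) := by exact_mod_cast (by omega : 1 ≤ m)
    have hmn : (m:ℝ) ≤ (n:ℝ) - 1 := by
      have : (m:ℝ) ≤ ((n-1:ℕ):ℝ) := by exact_mod_cast (by omega : m ≤ n-1)
      have : ((n-1:ℕ):ℝ) = (n:ℝ)-1 := by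
        rw [Nat.cast_sub (by omega)]; norm_num
      linarith [‹(m:ℝ) ≤ ((n-1:ℕ):ℝ)›]
    have hxm0 : 0 ≤ (m:ℝ)*Real.pi/n := by positivity
    have hxmπ : (m:ℝ)*Real.pi/n ≤ Real.pi := by
      rw [div_le_iff₀ hnR]
      nlinarith
    have hmono : lamN n 1 ≤ lamN n m := by
      unfold lamN
      have h1 : Real.cos ((m:ℝ)*Real.pi/n) ≤ Real.cos (((1:ℕ):ℝ)*Real.pi/n) := by
        apply Real.cos_le_cos_of_nonneg_of_le_pi
        · positivity
        · exact hxmπ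
        · push_cast
          rw [div_le_div_iff_of_pos_right hnR]
          nlinarith
      linarith
    have hlow : 2*(m:ℝ)^2 ≤ (n:ℝ)^2 * lamN n m := by
      have habs : |(m:ℝ)*Real.pi/n| ≤ Real.pi := by
        rw [abs_of_nonneg hxm0]; exact hxmπ
      have h1 := Real.cos_le_one_sub_mul_cos_sq habs
      have h2 : 2/Real.pi^2 * ((m:ℝ)*Real.pi/n)^2 = 2*(m:ℝ)^2/(n:ℝ)^2 := by
        field_simp
      unfold lamN
      rw [h2] at h1
      have h3 : 2*(m:ℝ)^2/(n:ℝ)^2 ≤ 1 - Real.cos ((m:ℝ)*Real.pi/n) := by linarith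
      calc 2*(m:ℝ)^2 = (n:ℝ)^2 * (2*(m:ℝ)^2/(n:ℝ)^2) := by field_simp
        _ ≤ (n:ℝ)^2 * (1 - Real.cos ((m:ℝ)*Real.pi/n)) := by
            apply mul_le_mul_of_nonneg_left h3 (by positivity)
    have hup : (n:ℝ)^2 * lamN n 1 ≤ 5 := by
      have h1 := Real.one_sub_sq_div_two_le_cos (x := Real.pi/n)
      have hπ315 : Real.pi ≤ 3.15 := by linarith [Real.pi_lt_d2]
      unfold lamN
      push_cast
      rw [one_mul]
      have h2 : (n:ℝ)^2 * (1 - Real.cos (Real.pi/n)) ≤ (n:ℝ)^2 * ((Real.pi/n)^2/2) := by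
        apply mul_le_mul_of_nonneg_left (by linarith) (by positivity)
      have h3 : (n:ℝ)^2 * ((Real.pi/n)^2/2) = Real.pi^2/2 := by field_simp
      nlinarith
    have hd0 : 0 ≤ lamN n m - lamN n 1 := by linarith
    have hta : (n:ℝ)^2 * (lamN n m - lamN n 1) ≤ t * (lamN n m - lamN n 1) :=
      mul_le_mul_of_nonneg_right ht hd0
    have hΔ : 2*(m:ℝ) - 5 ≤ t * lamN n m - t * lamN n 1 := by nlinarith
    have harg : t * (-(lamN n m)/2) ≤ -(lamOne n * t)/2 + ((3:ℝ)/2 - (a:ℕ)) := by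
      rw [hl1]
      have hma : (m:ℝ) = (a:ℕ) + 1 := by rw [hm]; push_cast; ring
      nlinarith
    calc e1 a = Real.exp (t * (-(lamN n m)/2)) := rfl
      _ ≤ Real.exp (-(lamOne n * t)/2 + ((3:ℝ)/2 - (a:ℕ))) := Real.exp_le_exp.mpr harg
      _ = Real.exp (-(lamOne n * t)/2) * (Real.exp ((3:ℝ)/2) * r^(a:ℕ)) := by
          rw [Real.exp_add, show ((3:ℝ)/2 - (a:ℕ)) = 3/2 + (a:ℕ)*(-1) by ring,
            Real.exp_add, Real.exp_nat_mul]
  have hrne : r ≠ 1 := by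
    intro h
    rw [h] at hrhalf
    norm_num at hrhalf
  have hgeo : ∑ j ∈ Finset.range (n-1), r^j ≤ 2 := by
    rw [geom_sum_eq hrne (n-1)]
    rw [div_le_iff_of_neg (by linarith : r - 1 < 0)]
    have h0 : (0:ℝ) ≤ r^(n-1) := by positivity
    nlinarith
  have hS0 : 0 ≤ ∑ a : Fin (n-1), e1 a :=
    Finset.sum_nonneg (fun a _ => (Real.exp_pos _).le)
  have hS : ∑ a : Fin (n-1), e1 a ≤ Bv := by
    calc ∑ a : Fin (n-1), e1 a
        ≤ ∑ a : Fin (n-1), Real.exp (-(lamOne n * t)/2) * (Real.exp ((3:ℝ)/2) * r^(a:ℕ)) :=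
          Finset.sum_le_sum (fun a _ => hB a)
      _ = Real.exp (-(lamOne n * t)/2) * Real.exp ((3:ℝ)/2)
            * ∑ a : Fin (n-1), r^(a:ℕ) := by
          rw [Finset.mul_sum]
          apply Finset.sum_congr rfl
          intro a _
          ring
      _ = Real.exp (-(lamOne n * t)/2) * Real.exp ((3:ℝ)/2)
            * ∑ j ∈ Finset.range (n-1), r^j := by
          rw [Fin.sum_univ_eq_sum_range (fun j => r^j) (n-1)]
      _ ≤ Real.exp (-(lamOne n * t)/2) * Real.exp ((3:ℝ)/2) * 2 := by
          apply mul_le_mul_of_nonneg_left hgeo (by positivity)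
      _ = Bv := by rw [hBv]
  -- entrywise bound
  rw [exp_entry n hn t x y]
  have hterm : ∀ k ∈ Finset.univ, (U1 n ⊗ₖ U1 n) x k
      * Real.exp (t * (-(lamN n ((k.1:ℕ)+1) + lamN n ((k.2:ℕ)+1))/2))
      * (((n:ℝ)^2/4)⁻¹ * (U1 n ⊗ₖ U1 n) k y)
      ≤ c⁻¹ * (e1 k.1 * e1 k.2) := by
    intro k _
    have hw : Real.exp (t * (-(lamN n ((k.1:ℕ)+1) + lamN n ((k.2:ℕ)+1))/2))
        = e1 k.1 * e1 k.2 := by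
      rw [he1]
      rw [← Real.exp_add]
      congr 1
      ring
    have hu1 : ∀ (i j : Fin (n-1)), |U1 n i j| ≤ 1 := by
      intro i j
      show |Real.sin _| ≤ 1
      exact abs_le.mpr ⟨Real.neg_one_le_sin _, Real.sin_le_one _⟩
    have hxy : (U1 n ⊗ₖ U1 n) x k * (U1 n ⊗ₖ U1 n) k y ≤ 1 := by
      have h1 : |(U1 n ⊗ₖ U1 n) x k * (U1 n ⊗ₖ U1 n) k y| ≤ 1 := by
        rw [abs_mul]
        have h2 : |(U1 n ⊗ₖ U1 n) x k| ≤ 1 := by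
          rw [Matrix.kroneckerMap_apply, abs_mul]
          exact mul_le_one₀ (hu1 _ _) (abs_nonneg _) (hu1 _ _)
        have h3 : |(U1 n ⊗ₖ U1 n) k y| ≤ 1 := by
          rw [Matrix.kroneckerMap_apply, abs_mul]
          exact mul_le_one₀ (hu1 _ _) (abs_nonneg _) (hu1 _ _)
        exact mul_le_one₀ h2 (abs_nonneg _) h3
      calc (U1 n ⊗ₖ U1 n) x k * (U1 n ⊗ₖ U1 n) k y
          ≤ |(U1 n ⊗ₖ U1 n) x k * (U1 n ⊗ₖ U1 n) k y| := le_abs_self _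
        _ ≤ 1 := h1
    rw [hw]
    calc (U1 n ⊗ₖ U1 n) x k * (e1 k.1 * e1 k.2) * (c⁻¹ * (U1 n ⊗ₖ U1 n) k y)
        = (c⁻¹ * (e1 k.1 * e1 k.2)) * ((U1 n ⊗ₖ U1 n) x k * (U1 n ⊗ₖ U1 n) k y) := by ring
      _ ≤ (c⁻¹ * (e1 k.1 * e1 k.2)) * 1 := by
          apply mul_le_mul_of_nonneg_left hxy
          positivity
      _ = c⁻¹ * (e1 k.1 * e1 k.2) := mul_one _
  calc ∑ k : Lam n, (U1 n ⊗ₖ U1 n) x k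
        * Real.exp (t * (-(lamN n ((k.1:ℕ)+1) + lamN n ((k.2:ℕ)+1))/2))
        * (((n:ℝ)^2/4)⁻¹ * (U1 n ⊗ₖ U1 n) k y)
      ≤ ∑ k : Lam n, c⁻¹ * (e1 k.1 * e1 k.2) := Finset.sum_le_sum hterm
    _ = c⁻¹ * ((∑ a : Fin (n-1), e1 a) * (∑ b : Fin (n-1), e1 b)) := by
        rw [← Finset.mul_sum]
        congr 1
        rw [Finset.sum_mul_sum]
        rw [← Finset.univ_product_univ, Finset.sum_product]
    _ ≤ c⁻¹ * (Bv * Bv) := by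
        apply mul_le_mul_of_nonneg_left _ (by positivity)
        have hBv0 : 0 ≤ Bv := by rw [hBv]; positivity
        exact mul_le_mul hS hS hS0 hBv0
    _ ≤ 900 / (n:ℝ)^2 * Real.exp (-(lamOne n) * t) := by
        have hBB : Bv * Bv = Real.exp (-(lamOne n) * t)
            * (Real.exp ((3:ℝ)/2) * Real.exp ((3:ℝ)/2)) * 4 := by
          rw [hBv, show -(lamOne n) * t = -(lamOne n * t)/2 + -(lamOne n * t)/2 by ring,
            Real.exp_add]
          ring
        have hee : Real.exp ((3:ℝ)/2) * Real.exp ((3:ℝ)/2) = Real.exp 3 := by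
          rw [← Real.exp_add]; norm_num
        have hexp3 : Real.exp 3 ≤ 21 := by
          have h1 := Real.exp_one_lt_d9
          have h2 : Real.exp 3 = Real.exp 1 * Real.exp 1 * Real.exp 1 := by
            rw [← Real.exp_add, ← Real.exp_add]; norm_num
          have h3 := Real.exp_pos 1
          nlinarith
        have hE := Real.exp_pos (-(lamOne n) * t)
        have h4 : c⁻¹ * (Real.exp (-(lamOne n) * t)
              * (Real.exp ((3:ℝ)/2) * Real.exp ((3:ℝ)/2)) * 4)
            = (16 * Real.exp 3) / (n:ℝ)^2 * Real.exp (-(lamOne n) * t) := by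
          rw [hee, hc]; field_simp; ring
        rw [hBB, h4]
        apply mul_le_mul_of_nonneg_right _ hE.le
        rw [div_le_div_iff_of_pos_right (by positivity : (0:ℝ) < (n:ℝ)^2)]
        nlinarith [hexp3, Real.exp_pos 3]

end DGFFStmt
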